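/- Let G : ℝ^{m×r} → ℝ be differentiable with L̃-Lipschitz gradient in the Frobenius norm, let ε > 0, let B ∈ ℝ^{m×r}, and let U ∈ ℝ^{m×r} be a random matrix whose entries are i.i.d. standard normal. Then E_U ‖ ((G(B + εU) − G(B − εU))/(2ε)) · U − ⟨∇G(B), U⟩_F · U ‖_F² ≤ (L̃² ε² / 4) · mr(mr+2)(mr+4). -/

import Mathlib

open MeasureTheory ProbabilityTheory Matrix
open scoped BigOperators

noncomputable section

attribute [local instance] Matrix.frobeniusNormedAddCommGroup Matrix.frobeniusNormedSpace

instance (m n : ℕ) : MeasurableSpace (Matrix (Fin m) (Fin n) ℝ) := MeasurableSpace.pi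

/-- Frobenius inner product `⟨A,B⟩_F = tr(A Bᵀ)`. -/
def finner {m n : ℕ} (A B : Matrix (Fin m) (Fin n) ℝ) : ℝ := (A * Bᵀ).trace

/-- `H ↦ ⟨G,H⟩_F` as a linear map. -/
def finnerLM {m n : ℕ} (G : Matrix (Fin m) (Fin n) ℝ) :
    Matrix (Fin m) (Fin n) ℝ →ₗ[ℝ] ℝ where
  toFun H := finner G H
  map_add' A B := by simp [finner, Matrix.transpose_add, Matrix.mul_add]
  map_smul' c A := by simp [finner, Matrix.transpose_smul, Matrix.mul_smul]

/-- `H ↦ ⟨G,H⟩_F` as a continuous linear map; `HasFDerivAt F (finnerCLM G) X` says that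
`G` is the gradient of `F` at `X` with respect to the Frobenius inner product. -/
def finnerCLM {m n : ℕ} (G : Matrix (Fin m) (Fin n) ℝ) :
    Matrix (Fin m) (Fin n) ℝ →L[ℝ] ℝ :=
  LinearMap.toContinuousLinearMap (finnerLM G)

/-- Law of an `m × r` random matrix with i.i.d. standard normal entries. -/
def gaussMat (m r : ℕ) : Measure (Matrix (Fin m) (Fin r) ℝ) :=
  Measure.pi fun _ : Fin m => Measure.pi fun _ : Fin r => gaussianReal 0 1


section Part1
open Real Set Filter
open scoped ENNReal NNReal


lemma integrable_abs_pow_mul_gauss (k : ℕ) :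
    Integrable (fun x : ℝ => |x| ^ k * Real.exp (-(1/2) * x ^ 2)) := by
  have h1 : IntegrableOn (fun x : ℝ => |x| ^ k * Real.exp (-(1/2) * x ^ 2)) (Ioi 0) := by
    refine (integrableOn_rpow_mul_exp_neg_mul_sq (by norm_num : (0:ℝ) < 1/2)
      (s := k) (lt_of_lt_of_le neg_one_lt_zero (Nat.cast_nonneg k))).congr_fun (fun x hx => ?_) measurableSet_Ioi
    simp only [Real.rpow_natCast, abs_of_pos (show (0:ℝ) < x from hx)]
  rw [← integrableOn_univ, ← Set.Iio_union_Ici (a := (0:ℝ)), integrableOn_union,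
    integrableOn_Ici_iff_integrableOn_Ioi]
  refine ⟨?_, h1⟩
  rw [← (Measure.measurePreserving_neg (volume : Measure ℝ)).integrableOn_comp_preimage
      (Homeomorph.neg ℝ).measurableEmbedding]
  simp only [Function.comp_def, abs_neg, neg_sq, neg_preimage, neg_Iio, neg_neg, neg_zero]
  exact h1

lemma integrable_pow_mul_gauss {k : ℕ} (hk : Even k) :
    Integrable (fun x : ℝ => x ^ k * Real.exp (-(1/2) * x ^ 2)) :=
  (integrable_abs_pow_mul_gauss k).congr <| by
    filter_upwards with x; rw [hk.pow_abs]

lemma gauss_tendsto_top (k : ℕ) :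
    Tendsto (fun x : ℝ => x ^ k * Real.exp (-(1/2) * x ^ 2)) atTop (nhds 0) := by
  have h := rpow_mul_exp_neg_mul_sq_isLittleO_exp_neg (by norm_num : (0:ℝ) < 1/2) (k : ℝ)
  simp_rw [Real.rpow_natCast] at h
  have h2 : Tendsto (fun x : ℝ => Real.exp (-(1/2) * x)) atTop (nhds 0) := by
    apply Real.tendsto_exp_atBot.comp
    exact tendsto_id.const_mul_atTop_of_neg (by norm_num : (-(1/2):ℝ) < 0)
  exact h.isBigO.trans_tendsto h2

lemma gauss_tendsto_bot (k : ℕ) :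
    Tendsto (fun x : ℝ => x ^ k * Real.exp (-(1/2) * x ^ 2)) atBot (nhds 0) := by
  have h := (gauss_tendsto_top k).comp tendsto_neg_atBot_atTop
  have : (fun x : ℝ => x ^ k * Real.exp (-(1/2) * x ^ 2)) =
      fun x : ℝ => (-1 : ℝ) ^ k * ((-x) ^ k * Real.exp (-(1/2) * (-x) ^ 2)) := by
    funext x; rw [neg_sq]; ring_nf; rw [mul_comm k 2, pow_mul]; norm_num
  rw [this]
  simpa using h.const_mul ((-1 : ℝ) ^ k)

lemma gauss_rec (k : ℕ) (hk : Even k) :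
    ∫ x : ℝ, x ^ (k + 2) * Real.exp (-(1/2) * x ^ 2) =
      (k + 1 : ℝ) * ∫ x : ℝ, x ^ k * Real.exp (-(1/2) * x ^ 2) := by
  set f : ℝ → ℝ := fun x => x ^ (k+1) * Real.exp (-(1/2) * x ^ 2) with hf
  have hd : ∀ x : ℝ, HasDerivAt f
      ((k + 1 : ℝ) * x ^ k * Real.exp (-(1/2) * x ^ 2)
        - x ^ (k+2) * Real.exp (-(1/2) * x ^ 2)) x := by
    intro x
    have h1 : HasDerivAt (fun x : ℝ => x ^ (k+1)) ((k + 1 : ℝ) * x ^ k) x := by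
      simpa using hasDerivAt_pow (k+1) x
    have h2 : HasDerivAt (fun x : ℝ => Real.exp (-(1/2) * x ^ 2))
        (Real.exp (-(1/2) * x ^ 2) * (-(1/2) * (2 * x ^ 1))) x :=
      (((hasDerivAt_pow 2 x).const_mul (-(1/2) : ℝ))).exp
    have : HasDerivAt (fun y : ℝ => y ^ (k+1) * Real.exp (-(1/2) * y ^ 2)) _ x := h1.mul h2
    convert this using 1
    ring
  have i1 : Integrable (fun x : ℝ => (k + 1 : ℝ) * x ^ k * Real.exp (-(1/2) * x ^ 2)) := by
    simpa [mul_assoc] using (integrable_pow_mul_gauss hk).const_mul (k + 1 : ℝ)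
  have i2 := integrable_pow_mul_gauss (k := k + 2) (hk.add even_two)
  have h0 := integral_of_hasDerivAt_of_tendsto hd (i1.sub i2)
    (gauss_tendsto_bot (k+1)) (gauss_tendsto_top (k+1))
  rw [integral_sub i1 i2] at h0
  simp only [mul_assoc] at h0
  rw [integral_const_mul] at h0
  exact (sub_eq_zero.mp (by simpa using h0)).symm

lemma gauss_int_eq (f : ℝ → ℝ) :
    ∫ x, f x ∂(gaussianReal 0 1) = ∫ x, gaussianPDFReal 0 1 x * f x := by
  rw [gaussianReal_of_var_ne_zero 0 one_ne_zero]
  rw [show gaussianPDF 0 1 = fun x => ((gaussianPDFReal 0 1 x).toNNReal : ℝ≥0∞) from rfl]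
  rw [integral_withDensity_eq_integral_smul
    ((measurable_gaussianPDFReal 0 1).real_toNNReal) f]
  congr 1; funext x
  simp [NNReal.smul_def, Real.coe_toNNReal _ (gaussianPDFReal_nonneg 0 1 x)]

lemma gauss_integrable_iff (f : ℝ → ℝ) :
    Integrable f (gaussianReal 0 1) ↔
      Integrable (fun x => gaussianPDFReal 0 1 x * f x) := by
  rw [gaussianReal_of_var_ne_zero 0 one_ne_zero]
  rw [show gaussianPDF 0 1 = fun x => ((gaussianPDFReal 0 1 x).toNNReal : ℝ≥0∞) from rfl]
  rw [integrable_withDensity_iff_integrable_smul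
    ((measurable_gaussianPDFReal 0 1).real_toNNReal)]
  constructor <;> intro h <;> refine h.congr (by
    filter_upwards with x
    simp [NNReal.smul_def, Real.coe_toNNReal _ (gaussianPDFReal_nonneg 0 1 x)])

lemma pdf_mul_pow (j : ℕ) : (fun x : ℝ => gaussianPDFReal 0 1 x * x ^ j)
    = fun x : ℝ => (Real.sqrt (2 * Real.pi))⁻¹ * (x ^ j * Real.exp (-(1/2) * x ^ 2)) := by
  funext x
  have harg : -(x - 0) ^ 2 / (2 * ((1:NNReal):ℝ)) = -(1/2) * x ^ 2 := by
    push_cast; ring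
  rw [gaussianPDFReal, harg]
  push_cast
  ring

lemma integrable_pow_gauss {k : ℕ} (hk : Even k) :
    Integrable (fun x : ℝ => x ^ k) (gaussianReal 0 1) := by
  rw [gauss_integrable_iff, pdf_mul_pow]
  exact (integrable_pow_mul_gauss hk).const_mul _

/-- k-th moment of the standard gaussian -/
def Mk (k : ℕ) : ℝ := ∫ x, x ^ k ∂(gaussianReal 0 1)

lemma Mk_zero : Mk 0 = 1 := by simp [Mk]

lemma Mk_rec (k : ℕ) (hk : Even k) : Mk (k + 2) = (k + 1 : ℝ) * Mk k := by
  rw [Mk, Mk, gauss_int_eq, gauss_int_eq]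
  rw [show (fun x : ℝ => gaussianPDFReal 0 1 x * x ^ (k+2)) = _ from pdf_mul_pow (k+2),
      show (fun x : ℝ => gaussianPDFReal 0 1 x * x ^ k) = _ from pdf_mul_pow k]
  rw [integral_const_mul, integral_const_mul, gauss_rec k hk]
  ring

lemma Mk_two : Mk 2 = 1 := by
  have := Mk_rec 0 Even.zero; rw [Mk_zero] at this; norm_num at this; exact this

lemma Mk_four : Mk 4 = 3 := by
  have := Mk_rec 2 even_two; rw [Mk_two] at this; norm_num at this; exact this

lemma Mk_six : Mk 6 = 15 := by
  have := Mk_rec 4 (by decide) ; rw [Mk_four] at this; norm_num at this; exact this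

end Part1

lemma finner_eq {m n : ℕ} (A B : Matrix (Fin m) (Fin n) ℝ) :
    finner A B = ∑ i, ∑ j, A i j * B i j := by
  simp [finner, Matrix.trace, Matrix.diag, Matrix.mul_apply]

lemma fnorm_sq {m n : ℕ} (A : Matrix (Fin m) (Fin n) ℝ) :
    ‖A‖ ^ 2 = ∑ i, ∑ j, (A i j) ^ 2 := by
  rw [Matrix.frobenius_norm_def]
  rw [← Real.rpow_natCast _ 2, ← Real.rpow_mul (by positivity)]
  norm_num

lemma fnorm_eq_sqrt {m n : ℕ} (A : Matrix (Fin m) (Fin n) ℝ) :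
    ‖A‖ = Real.sqrt (∑ i, ∑ j, (A i j) ^ 2) := by
  rw [← fnorm_sq, Real.sqrt_sq (norm_nonneg A)]

lemma abs_finner_le {m n : ℕ} (A B : Matrix (Fin m) (Fin n) ℝ) :
    |finner A B| ≤ ‖A‖ * ‖B‖ := by
  rw [finner_eq, fnorm_eq_sqrt, fnorm_eq_sqrt]
  rw [abs_le]
  constructor
  · have h := Real.sum_mul_le_sqrt_mul_sqrt Finset.univ
      (fun p : Fin m × Fin n => -(A p.1 p.2)) (fun p => B p.1 p.2)
    simp only [neg_mul, Finset.sum_neg_distrib, neg_sq, Fintype.sum_prod_type] at h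
    linarith [h]
  · have h := Real.sum_mul_le_sqrt_mul_sqrt Finset.univ
      (fun p : Fin m × Fin n => A p.1 p.2) (fun p => B p.1 p.2)
    simp only [Fintype.sum_prod_type] at h
    exact h

lemma finner_sub_left {m n : ℕ} (A B C : Matrix (Fin m) (Fin n) ℝ) :
    finner A C - finner B C = finner (A - B) C := by
  simp [finner_eq, Finset.sum_sub_distrib, sub_mul]

lemma finner_smul_right {m n : ℕ} (A B : Matrix (Fin m) (Fin n) ℝ) (c : ℝ) :
    finner A (c • B) = c * finner A B := by
  simp only [finner_eq, Matrix.smul_apply, smul_eq_mul, Finset.mul_sum]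
  exact Finset.sum_congr rfl fun i _ => Finset.sum_congr rfl fun j _ => by ring

section Taylor

variable {m r : ℕ} {G : Matrix (Fin m) (Fin r) ℝ → ℝ} {Lt : ℝ}
  {gradG : Matrix (Fin m) (Fin r) ℝ → Matrix (Fin m) (Fin r) ℝ}

lemma taylor_bound
    (hderiv : ∀ B, HasFDerivAt G (finnerCLM (gradG B)) B)
    (hlip : ∀ B₁ B₂, ‖gradG B₁ - gradG B₂‖ ≤ Lt * ‖B₁ - B₂‖)
    (X V : Matrix (Fin m) (Fin r) ℝ) :
    |G (X + V) - G X - finner (gradG X) V| ≤ Lt / 2 * ‖V‖ ^ 2 := by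
  set ψ : ℝ → ℝ := fun t => finner (gradG (X + t • V)) V with hψ
  have hφ : ∀ t : ℝ, HasDerivAt (fun t : ℝ => G (X + t • V)) (ψ t) t := by
    intro t
    have hline : HasDerivAt (fun t : ℝ => X + t • V) V t := by
      exact (((hasDerivAt_id t).smul_const V).const_add X).congr_deriv (by simp)
    exact (hderiv (X + t • V)).comp_hasDerivAt t hline
  have hkey : ∀ s t : ℝ, |ψ s - ψ t| ≤ Lt * ‖V‖ ^ 2 * |s - t| := by
    intro s t
    have e1 : ψ s - ψ t = finner (gradG (X + s • V) - gradG (X + t • V)) V :=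
      (finner_sub_left _ _ _)
    rw [e1]
    calc |finner (gradG (X + s • V) - gradG (X + t • V)) V|
        ≤ ‖gradG (X + s • V) - gradG (X + t • V)‖ * ‖V‖ := abs_finner_le _ _
      _ ≤ (Lt * ‖(X + s • V) - (X + t • V)‖) * ‖V‖ := by
          apply mul_le_mul_of_nonneg_right (hlip _ _) (norm_nonneg _)
      _ = Lt * ‖V‖ ^ 2 * |s - t| := by
          rw [show (X + s • V) - (X + t • V) = (s - t) • V by module]
          rw [norm_smul]
          simp only [Real.norm_eq_abs]
          ring
  have hψcont : Continuous ψ := by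
    have hl : LipschitzWith (Real.toNNReal (Lt * ‖V‖ ^ 2)) ψ := by
      apply LipschitzWith.of_dist_le_mul
      intro s t
      rw [Real.dist_eq, Real.dist_eq]
      refine (hkey s t).trans ?_
      apply mul_le_mul_of_nonneg_right (Real.le_coe_toNNReal _) (abs_nonneg _)
    exact hl.continuous
  have hFTC : ∫ t in (0:ℝ)..1, ψ t = G (X + V) - G X := by
    have := intervalIntegral.integral_eq_sub_of_hasDerivAt
      (f := fun t : ℝ => G (X + t • V)) (f' := ψ) (a := 0) (b := 1)
      (fun t _ => hφ t) (hψcont.intervalIntegrable 0 1)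
    simpa using this
  have hψ0 : ψ 0 = finner (gradG X) V := by simp [hψ]
  have key : G (X + V) - G X - finner (gradG X) V = ∫ t in (0:ℝ)..1, (ψ t - ψ 0) := by
    rw [intervalIntegral.integral_sub (hψcont.intervalIntegrable 0 1)
      (intervalIntegrable_const), hFTC, hψ0]
    simp
  rw [key]
  have hbd : ∀ t ∈ Set.Icc (0:ℝ) 1, |ψ t - ψ 0| ≤ Lt * ‖V‖ ^ 2 * t := by
    intro t ht
    refine (hkey t 0).trans_eq ?_
    rw [sub_zero, abs_of_nonneg ht.1]
  calc |∫ t in (0:ℝ)..1, (ψ t - ψ 0)| ≤ ∫ t in (0:ℝ)..1, |ψ t - ψ 0| := by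
        simpa using intervalIntegral.abs_integral_le_integral_abs (by norm_num : (0:ℝ) ≤ 1)
    _ ≤ ∫ t in (0:ℝ)..1, Lt * ‖V‖ ^ 2 * t := by
        apply intervalIntegral.integral_mono_on (by norm_num)
        · exact ((hψcont.sub continuous_const).abs.intervalIntegrable 0 1)
        · exact ((continuous_const.mul continuous_id).intervalIntegrable 0 1)
        · exact hbd
    _ = Lt / 2 * ‖V‖ ^ 2 := by
        rw [intervalIntegral.integral_const_mul, integral_id]
        ring

end Taylor

section PiTrick

attribute [-instance] Real.measureSpace
attribute [local instance] Real.measurableSpace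

local instance grMS : MeasureSpace ℝ := ⟨gaussianReal 0 1⟩

local instance sf_gr : SigmaFinite (volume : Measure ℝ) :=
  show SigmaFinite (gaussianReal 0 1) from inferInstance

lemma sf_row (r : ℕ) : SigmaFinite (volume : Measure (Fin r → ℝ)) := by
  rw [volume_pi]; infer_instance

lemma integral_gaussMat_prod {m r : ℕ} (f : Fin m → Fin r → ℝ → ℝ) :
    ∫ U : Matrix (Fin m) (Fin r) ℝ, (∏ i, ∏ j, f i j (U i j)) ∂(gaussMat m r)
      = ∏ i, ∏ j, ∫ x, f i j x ∂(gaussianReal 0 1) := by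
  haveI := fun (i : Fin m) => sf_row r
  have h1 : ∫ U : Matrix (Fin m) (Fin r) ℝ, (∏ i, ∏ j, f i j (U i j)) ∂(gaussMat m r)
      = ∏ i, ∫ y : Fin r → ℝ, ∏ j, f i j (y j) :=
    MeasureTheory.integral_fintype_prod_eq_prod
      (fun i => fun (y : Fin r → ℝ) => ∏ j, f i j (y j))
  rw [h1]
  congr 1; funext i
  exact MeasureTheory.integral_fintype_prod_eq_prod (fun j => fun x => f i j x)

lemma integrable_gaussMat_prod {m r : ℕ} {f : Fin m → Fin r → ℝ → ℝ}
    (hf : ∀ i j, Integrable (f i j) (gaussianReal 0 1)) :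
    Integrable (fun U : Matrix (Fin m) (Fin r) ℝ => ∏ i, ∏ j, f i j (U i j))
      (gaussMat m r) := by
  haveI := fun (i : Fin m) => sf_row r
  exact Integrable.fintype_prod_dep
    (f := fun i => fun (y : Fin r → ℝ) => ∏ j, f i j (y j))
    (fun i => Integrable.fintype_prod_dep (fun j => hf i j))

end PiTrick

section Comb

variable {α : Type*} [Fintype α] [DecidableEq α]

def ep (p q s c : α) : ℕ :=
  2 * ((if c = p then 1 else 0) + (if c = q then 1 else 0) + (if c = s then 1 else 0))

lemma prod_pow_ep (p q s : α) (x : α → ℝ) :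
    (∏ c : α, x c ^ ep p q s c) = x p ^ 2 * x q ^ 2 * x s ^ 2 := by
  have h : ∀ t : α, (∏ c : α, x c ^ (2 * if c = t then 1 else 0)) = x t ^ 2 := by
    intro t
    rw [Finset.prod_congr rfl (fun c _ =>
      show x c ^ (2 * if c = t then 1 else 0) = if c = t then x c ^ 2 else 1 by
        split <;> simp)]
    simp
  rw [← h p, ← h q, ← h s, ← Finset.prod_mul_distrib, ← Finset.prod_mul_distrib]
  apply Finset.prod_congr rfl
  intro c _
  rw [ep, ← pow_add, ← pow_add]
  congr 1
  ring

lemma prod_Mk_ep (p q s : α) :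
    (∏ c : α, Mk (ep p q s c)) =
      1 + (if p = q then (2:ℝ) else 0) + (if q = s then 2 else 0) + (if p = s then 2 else 0)
        + (if p = q ∧ q = s then 8 else 0) := by
  by_cases hpq : p = q
  · subst hpq
    by_cases hps : p = s
    · subst hps
      rw [Finset.prod_eq_single p (fun c _ hc => by simp [ep, hc, Mk_zero])
        (fun h => absurd (Finset.mem_univ p) h)]
      simp [ep, Mk_six]
      norm_num
    · rw [Finset.prod_eq_single p (fun c _ hc => by
        by_cases hcs : c = s
        · simp [ep, hc, hcs, Ne.symm hps, Mk_two]
        · simp [ep, hc, hcs, Mk_zero])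
        (fun h => absurd (Finset.mem_univ p) h)]
      simp [ep, hps, Mk_four]
      norm_num
  · by_cases hqs : q = s
    · subst hqs
      have hps : p ≠ q := hpq
      rw [Finset.prod_eq_single q (fun c _ hc => by
        by_cases hcp : c = p
        · simp [ep, hc, hcp, hpq, Mk_two]
        · simp [ep, hc, hcp, Mk_zero])
        (fun h => absurd (Finset.mem_univ q) h)]
      simp [ep, hpq, Ne.symm hpq, Mk_four]
      norm_num
    · by_cases hps : p = s
      · subst hps
        rw [Finset.prod_eq_single p (fun c _ hc => by
          by_cases hcq : c = q
          · simp [ep, hc, hcq, Ne.symm hpq, Ne.symm hqs, Mk_two]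
          · simp [ep, hc, hcq, Mk_zero])
          (fun h => absurd (Finset.mem_univ p) h)]
        simp [ep, hpq, Ne.symm hpq, hqs, Mk_four]
        norm_num
      · rw [Finset.prod_eq_one (fun c _ => by
          by_cases hcp : c = p
          · simp [ep, hcp, hpq, hps, Mk_two]
          · by_cases hcq : c = q
            · simp [ep, hcp, hcq, Ne.symm hpq, hqs, Mk_two]
            · by_cases hcs : c = s
              · simp [ep, hcp, hcq, hcs, Ne.symm hps, Ne.symm hqs, Mk_two]
              · simp [ep, hcp, hcq, hcs, Mk_zero])]
        simp [hpq, hqs, hps]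

lemma sum_val :
    ∑ p : α, ∑ q : α, ∑ s : α,
      (1 + (if p = q then (2:ℝ) else 0) + (if q = s then 2 else 0) + (if p = s then 2 else 0)
        + (if p = q ∧ q = s then 8 else 0))
      = (Fintype.card α : ℝ) ^ 3 + 6 * (Fintype.card α : ℝ) ^ 2
        + 8 * (Fintype.card α : ℝ) := by
  simp [Finset.sum_add_distrib, Finset.sum_ite_eq, Finset.sum_ite_eq', ite_and,
    Finset.card_univ, Finset.mul_sum, Finset.sum_comm]
  ring

end Comb

lemma integral_gaussMat_prod' {m r : ℕ} (g : Fin m × Fin r → ℝ → ℝ) :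
    ∫ U : Matrix (Fin m) (Fin r) ℝ, (∏ c : Fin m × Fin r, g c (U c.1 c.2)) ∂(gaussMat m r)
      = ∏ c : Fin m × Fin r, ∫ x, g c x ∂(gaussianReal 0 1) := by
  rw [show (fun U : Matrix (Fin m) (Fin r) ℝ => ∏ c : Fin m × Fin r, g c (U c.1 c.2))
      = fun U => ∏ i, ∏ j, g (i, j) (U i j) from funext fun U =>
      Fintype.prod_prod_type (fun c : Fin m × Fin r => g c (U c.1 c.2))]
  rw [integral_gaussMat_prod (fun i j => g (i, j))]
  exact (Fintype.prod_prod_type (fun c : Fin m × Fin r => ∫ x, g c x ∂(gaussianReal 0 1))).symm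

lemma integrable_gaussMat_prod' {m r : ℕ} {g : Fin m × Fin r → ℝ → ℝ}
    (hg : ∀ c, Integrable (g c) (gaussianReal 0 1)) :
    Integrable (fun U : Matrix (Fin m) (Fin r) ℝ => ∏ c : Fin m × Fin r, g c (U c.1 c.2))
      (gaussMat m r) := by
  have h := integrable_gaussMat_prod (f := fun i j => g (i, j)) (fun i j => hg (i, j))
  refine h.congr (Filter.Eventually.of_forall fun U => ?_)
  exact (Fintype.prod_prod_type (fun c : Fin m × Fin r => g c (U c.1 c.2))).symm

lemma term_integrable {m r : ℕ} (p q s : Fin m × Fin r) :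
    Integrable
      (fun U : Matrix (Fin m) (Fin r) ℝ =>
        (U p.1 p.2) ^ 2 * (U q.1 q.2) ^ 2 * (U s.1 s.2) ^ 2) (gaussMat m r) := by
  have h := integrable_gaussMat_prod' (g := fun c x => x ^ ep p q s c)
    (fun c => integrable_pow_gauss (even_two_mul _))
  refine h.congr (Filter.Eventually.of_forall fun U => ?_)
  exact prod_pow_ep p q s (fun c => U c.1 c.2)

lemma term_integral {m r : ℕ} (p q s : Fin m × Fin r) :
    ∫ U : Matrix (Fin m) (Fin r) ℝ,
        (U p.1 p.2) ^ 2 * (U q.1 q.2) ^ 2 * (U s.1 s.2) ^ 2 ∂(gaussMat m r)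
      = 1 + (if p = q then (2:ℝ) else 0) + (if q = s then 2 else 0) + (if p = s then 2 else 0)
        + (if p = q ∧ q = s then 8 else 0) := by
  rw [← prod_Mk_ep p q s]
  rw [show (fun U : Matrix (Fin m) (Fin r) ℝ =>
      (U p.1 p.2) ^ 2 * (U q.1 q.2) ^ 2 * (U s.1 s.2) ^ 2)
    = fun U : Matrix (Fin m) (Fin r) ℝ => ∏ c : Fin m × Fin r, (U c.1 c.2) ^ ep p q s c from
    funext fun U => (prod_pow_ep p q s (fun c => U c.1 c.2)).symm]
  rw [integral_gaussMat_prod' (fun c x => x ^ ep p q s c)]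
  exact Finset.prod_congr rfl fun c _ => rfl

lemma S3_integrable (m r : ℕ) :
    Integrable
      (fun U : Matrix (Fin m) (Fin r) ℝ => (∑ c : Fin m × Fin r, (U c.1 c.2) ^ 2) ^ 3)
      (gaussMat m r) := by
  have hexp : ∀ U : Matrix (Fin m) (Fin r) ℝ,
      (∑ c : Fin m × Fin r, (U c.1 c.2) ^ 2) ^ 3
        = ∑ p : Fin m × Fin r, ∑ q : Fin m × Fin r, ∑ s : Fin m × Fin r,
            (U p.1 p.2) ^ 2 * (U q.1 q.2) ^ 2 * (U s.1 s.2) ^ 2 := by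
    intro U
    rw [pow_succ, pow_two, Finset.sum_mul_sum]
    simp_rw [Finset.sum_mul, Finset.mul_sum]
  rw [show (fun U : Matrix (Fin m) (Fin r) ℝ => (∑ c : Fin m × Fin r, (U c.1 c.2) ^ 2) ^ 3)
    = fun U => ∑ p : Fin m × Fin r, ∑ q : Fin m × Fin r, ∑ s : Fin m × Fin r,
        (U p.1 p.2) ^ 2 * (U q.1 q.2) ^ 2 * (U s.1 s.2) ^ 2 from funext hexp]
  exact integrable_finset_sum _ (fun p _ => integrable_finset_sum _ (fun q _ =>
    integrable_finset_sum _ (fun s _ => term_integrable p q s)))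

lemma S3_integral (m r : ℕ) :
    ∫ U : Matrix (Fin m) (Fin r) ℝ,
        (∑ c : Fin m × Fin r, (U c.1 c.2) ^ 2) ^ 3 ∂(gaussMat m r)
      = ((m * r : ℕ) : ℝ) ^ 3 + 6 * ((m * r : ℕ) : ℝ) ^ 2 + 8 * ((m * r : ℕ) : ℝ) := by
  have hexp : ∀ U : Matrix (Fin m) (Fin r) ℝ,
      (∑ c : Fin m × Fin r, (U c.1 c.2) ^ 2) ^ 3
        = ∑ p : Fin m × Fin r, ∑ q : Fin m × Fin r, ∑ s : Fin m × Fin r,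
            (U p.1 p.2) ^ 2 * (U q.1 q.2) ^ 2 * (U s.1 s.2) ^ 2 := by
    intro U
    rw [pow_succ, pow_two, Finset.sum_mul_sum]
    simp_rw [Finset.sum_mul, Finset.mul_sum]
  simp_rw [hexp]
  rw [integral_finset_sum _ (fun p _ => integrable_finset_sum _ (fun q _ =>
    integrable_finset_sum _ (fun s _ => term_integrable p q s)))]
  rw [Finset.sum_congr rfl (fun p _ => integral_finset_sum _ (fun q _ =>
    integrable_finset_sum _ (fun s _ => term_integrable p q s)))]
  rw [Finset.sum_congr rfl (fun p _ => Finset.sum_congr rfl (fun q _ =>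
    integral_finset_sum _ (fun s _ => term_integrable p q s)))]
  rw [Finset.sum_congr rfl (fun p _ => Finset.sum_congr rfl (fun q _ =>
    Finset.sum_congr rfl (fun s _ => term_integral p q s)))]
  rw [sum_val]
  have hcard : (Fintype.card (Fin m × Fin r) : ℝ) = ((m * r : ℕ) : ℝ) := by
    simp [Fintype.card_prod]
  rw [hcard]

/-- mean-squared error of the finite-difference estimator against the
linearization: `E_U‖∇̂G(B) − ⟨∇G(B),U⟩_F · U‖_F² ≤ (L̃²ε²/4)·mr(mr+2)(mr+4)`. -/
theorem stmt_18 {m r : ℕ} (hm : 0 < m) (hr : 0 < r)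
    (G : Matrix (Fin m) (Fin r) ℝ → ℝ) (Lt : ℝ)
    (gradG : Matrix (Fin m) (Fin r) ℝ → Matrix (Fin m) (Fin r) ℝ)
    (hderiv : ∀ B, HasFDerivAt G (finnerCLM (gradG B)) B)
    (hlip : ∀ B₁ B₂, ‖gradG B₁ - gradG B₂‖ ≤ Lt * ‖B₁ - B₂‖)
    (ε : ℝ) (hε : 0 < ε) (B : Matrix (Fin m) (Fin r) ℝ) :
    ∫ U, ‖((G (B + ε • U) - G (B - ε • U)) / (2 * ε)) • U -
          finner (gradG B) U • U‖ ^ 2 ∂gaussMat m r ≤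
      Lt ^ 2 * ε ^ 2 / 4 *
        (((m * r : ℕ) : ℝ) * (((m * r : ℕ) : ℝ) + 2) * (((m * r : ℕ) : ℝ) + 4)) := by
  have hnormsq : ∀ U : Matrix (Fin m) (Fin r) ℝ,
      ‖U‖ ^ 2 = ∑ c : Fin m × Fin r, (U c.1 c.2) ^ 2 := by
    intro U
    rw [fnorm_sq]
    exact (Fintype.sum_prod_type (fun c : Fin m × Fin r => (U c.1 c.2) ^ 2)).symm
  have hpt : ∀ U : Matrix (Fin m) (Fin r) ℝ,
      ‖((G (B + ε • U) - G (B - ε • U)) / (2 * ε)) • U - finner (gradG B) U • U‖ ^ 2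
        ≤ Lt ^ 2 * ε ^ 2 / 4 * (∑ c : Fin m × Fin r, (U c.1 c.2) ^ 2) ^ 3 := by
    intro U
    set a : ℝ := (G (B + ε • U) - G (B - ε • U)) / (2 * ε) with ha
    set b : ℝ := finner (gradG B) U with hb
    have t1 := taylor_bound hderiv hlip B (ε • U)
    have t2 := taylor_bound hderiv hlip B (-(ε • U))
    rw [← sub_eq_add_neg] at t2
    have hsm1 : finner (gradG B) (ε • U) = ε * b := finner_smul_right _ _ _
    have hsm2 : finner (gradG B) (-(ε • U)) = -(ε * b) := by
      rw [show -(ε • U) = (-ε) • U by simp [neg_smul], finner_smul_right]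
      ring
    have hns : ‖ε • U‖ ^ 2 = ε ^ 2 * ‖U‖ ^ 2 := by
      rw [norm_smul, Real.norm_eq_abs, mul_pow, sq_abs]
    have hns2 : ‖-(ε • U)‖ ^ 2 = ε ^ 2 * ‖U‖ ^ 2 := by rw [norm_neg]; exact hns
    rw [hsm1, hns] at t1
    rw [hsm2, hns2] at t2
    have habs : |a - b| ≤ Lt * ε * ‖U‖ ^ 2 / 2 := by
      have hab : a - b
          = ((G (B + ε • U) - G B - ε * b) - (G (B - ε • U) - G B - -(ε * b))) / (2 * ε) := by
        rw [ha]
        field_simp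
        ring
      rw [hab, abs_div, abs_of_pos (by linarith : (0:ℝ) < 2 * ε),
        div_le_div_iff₀ (by linarith : (0:ℝ) < 2 * ε) (by norm_num : (0:ℝ) < 2)]
      have htri : |G (B + ε • U) - G B - ε * b - (G (B - ε • U) - G B - -(ε * b))|
          ≤ Lt / 2 * (ε ^ 2 * ‖U‖ ^ 2) + Lt / 2 * (ε ^ 2 * ‖U‖ ^ 2) :=
        (abs_sub _ _).trans (add_le_add t1 t2)
      calc |G (B + ε • U) - G B - ε * b - (G (B - ε • U) - G B - -(ε * b))| * 2
          ≤ (Lt / 2 * (ε ^ 2 * ‖U‖ ^ 2) + Lt / 2 * (ε ^ 2 * ‖U‖ ^ 2)) * 2 :=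
            mul_le_mul_of_nonneg_right htri (by norm_num)
        _ = Lt * ε * ‖U‖ ^ 2 * (2 * ε) := by ring
    calc ‖a • U - b • U‖ ^ 2 = (a - b) ^ 2 * ‖U‖ ^ 2 := by
          rw [← sub_smul, norm_smul, Real.norm_eq_abs, mul_pow, sq_abs]
      _ ≤ (Lt * ε * ‖U‖ ^ 2 / 2) ^ 2 * ‖U‖ ^ 2 := by
          apply mul_le_mul_of_nonneg_right _ (by positivity)
          rw [← sq_abs]
          exact pow_le_pow_left₀ (abs_nonneg _) habs 2
      _ = Lt ^ 2 * ε ^ 2 / 4 * (‖U‖ ^ 2) ^ 3 := by ring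
      _ = Lt ^ 2 * ε ^ 2 / 4 * (∑ c : Fin m × Fin r, (U c.1 c.2) ^ 2) ^ 3 := by
          rw [hnormsq]
  have hInt : Integrable
      (fun U : Matrix (Fin m) (Fin r) ℝ =>
        Lt ^ 2 * ε ^ 2 / 4 * (∑ c : Fin m × Fin r, (U c.1 c.2) ^ 2) ^ 3)
      (gaussMat m r) := (S3_integrable m r).const_mul _
  have hmono := integral_mono_of_nonneg
    (Filter.Eventually.of_forall (fun U => by positivity)) hInt
    (Filter.Eventually.of_forall hpt)
  refine hmono.trans ?_
  rw [integral_const_mul, S3_integral]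
  apply le_of_eq
  push_cast
  ring
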